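/- Let A be the graded-commutative real dg algebra with basis 1 (degree 0), ω (degree n, n ≥ 2), with zero differential on the subalgebra generated by 1 and ω, together with an element τ of degree n−1 and an element ω' of degree n satisfying dτ = ω', τ·τ = 0, ω·ω = ω·ω' = ω'·ω' = 0, ω·τ = τ·ω = ω'·τ = τ·ω' = 0 (as in the algebra U of the formality proof for S^n). Then the projection A → H(A) killing τ and ω' is a quasi-isomorphism of dg algebras; hence A is formal. -/

import Mathlib

/-- A differential graded algebra over a commutative ring `K`. -/
structure DGA (K : Type*) [CommRing K] where
  carrier : Type*
  [ring : Ring carrier]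
  [alg : Algebra K carrier]
  grade : ℤ → Submodule K carrier
  internal : DirectSum.IsInternal grade
  one_mem : (1 : carrier) ∈ grade 0
  mul_mem : ∀ {i j : ℤ} {a b : carrier}, a ∈ grade i → b ∈ grade j → a * b ∈ grade (i + j)
  d : carrier →ₗ[K] carrier
  d_mem : ∀ {i : ℤ} {a : carrier}, a ∈ grade i → d a ∈ grade (i + 1)
  d_sq : ∀ a : carrier, d (d a) = 0
  leibniz : ∀ {i : ℤ} (a b : carrier), a ∈ grade i →
    d (a * b) = d a * b + ((i.negOnePow : ℤ) • (a * d b))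

attribute [instance] DGA.ring DGA.alg

/-- A morphism of dg algebras: a `K`-algebra homomorphism compatible with the gradings and
the differentials. -/
structure DGAHom {K : Type*} [CommRing K] (A B : DGA K) where
  toHom : A.carrier →ₐ[K] B.carrier
  map_grade : ∀ {i : ℤ} {a : A.carrier}, a ∈ A.grade i → toHom a ∈ B.grade i
  map_d : ∀ a : A.carrier, toHom (A.d a) = B.d (toHom a)

/-- A morphism of dg algebras is a quasi-isomorphism if it induces a bijection on
cohomology in each degree. -/
def DGAHom.IsQIso {K : Type*} [CommRing K] {A B : DGA K} (f : DGAHom A B) : Prop :=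
  (∀ (i : ℤ), ∀ b ∈ B.grade i, B.d b = 0 →
    ∃ a ∈ A.grade i, A.d a = 0 ∧ ∃ x, f.toHom a - b = B.d x) ∧
  (∀ (i : ℤ), ∀ a ∈ A.grade i, A.d a = 0 →
    (∃ y, f.toHom a = B.d y) → ∃ x, a = A.d x)

universe u v

/-- A dg algebra is formal if it is connected to a dg algebra with trivial differential by
a chain (here: a roof) of quasi-isomorphisms of dg algebras. -/
def DGA.IsFormal {K : Type u} [CommRing K] (A : DGA.{u, v} K) : Prop :=
  ∃ (U H : DGA.{u, v} K) (f : DGAHom U A) (g : DGAHom U H),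
    H.d = 0 ∧ f.IsQIso ∧ g.IsQIso


/- ## Auxiliary constructions -/

open DualNumber TrivSqZeroExt Submodule

universe w

/-- Carrier for the cohomology algebra: dual numbers, lifted to an arbitrary universe. -/
abbrev FormAux.Hcar : Type w := ULift.{w} (DualNumber ℝ)

namespace FormAux

instance : IsScalarTower ℝ Hcar.{w} Hcar.{w} := IsScalarTower.right
instance : SMulCommClass ℝ Hcar.{w} Hcar.{w} := Algebra.to_smulCommClass

/-- The degree-`n` generator of the cohomology algebra. -/
def eU : Hcar.{w} := ⟨eps⟩

lemma eU_mul_eU : (eU.{w}) * eU = 0 := by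
  have h : (eU.{w}) * eU = ⟨eps * eps⟩ := rfl
  rw [h, eps_mul_eps]; rfl

lemma eU_ne_zero : (eU.{w}) ≠ 0 := by
  intro h
  have h2 := congrArg (fun z : Hcar.{w} => z.down.snd) h
  simp only [eU] at h2
  exact one_ne_zero (α := ℝ) h2

lemma repr_H (x : Hcar.{w}) : x = x.down.fst • 1 + x.down.snd • eU := by
  have h : x.down = x.down.fst • 1 + x.down.snd • eps := by
    conv_lhs => rw [← inl_fst_add_inr_snd_eq x.down]
    rw [inr_eq_smul_eps]
    congr 1
    ext <;> simp
  apply ULift.ext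
  exact h

lemma smul_one_eq_zero {c : ℝ} (h : c • (1 : Hcar.{w}) = 0) : c = 0 := by
  have h2 := congrArg (fun z : Hcar.{w} => z.down.fst) h
  simpa using h2

lemma smul_eU_eq_zero {c : ℝ} (h : c • eU.{w} = 0) : c = 0 := by
  have h2 := congrArg (fun z : Hcar.{w} => z.down.snd) h
  simpa [eU] using h2

/-- The grading on the cohomology algebra. -/
def Hgrade (n : ℕ) : ℤ → Submodule ℝ (Hcar.{w}) := fun i =>
  if i = 0 then span ℝ {(1 : Hcar.{w})} else if i = (n : ℤ) then span ℝ {eU.{w}} else ⊥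

lemma Hgrade_zero (n : ℕ) : Hgrade.{w} n 0 = span ℝ {(1 : Hcar.{w})} := if_pos rfl

lemma Hgrade_n (n : ℕ) (hn : 2 ≤ n) : Hgrade.{w} n n = span ℝ {eU.{w}} := by
  rw [Hgrade, if_neg (by omega : (n : ℤ) ≠ 0), if_pos rfl]

lemma Hgrade_other (n : ℕ) (i : ℤ) (h0 : i ≠ 0) (hn : i ≠ (n : ℤ)) :
    Hgrade.{w} n i = ⊥ := by rw [Hgrade, if_neg h0, if_neg hn]

lemma Hgrade_ne_zero (n : ℕ) (i : ℤ) (hi : i ≠ 0) (x : Hcar.{w}) (hx : x ∈ Hgrade.{w} n i) :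
    ∃ c : ℝ, x = c • eU.{w} := by
  rw [Hgrade, if_neg hi] at hx
  split_ifs at hx with h
  · obtain ⟨c, hc⟩ := mem_span_singleton.mp hx
    exact ⟨c, hc.symm⟩
  · exact ⟨0, by simpa using hx⟩

/-- The cohomology dg algebra `H = ℝ ⊕ ℝ·e`, with `e` in degree `n` and zero differential. -/
noncomputable def Hdga (n : ℕ) (hn : 2 ≤ n) : DGA.{0, w} ℝ where
  carrier := Hcar.{w}
  grade := Hgrade.{w} n
  internal := by
    rw [DirectSum.isInternal_submodule_iff_iSupIndep_and_iSup_eq_top]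
    constructor
    · intro i
      rw [Submodule.disjoint_def]
      intro x hx hx'
      by_cases hi0 : i = 0
      · subst hi0
        have hle : (⨆ j, ⨆ _ : j ≠ (0 : ℤ), Hgrade.{w} n j) ≤ span ℝ {eU.{w}} := by
          refine iSup₂_le fun j hj => ?_
          by_cases hjn : j = (n : ℤ)
          · subst hjn; rw [Hgrade_n n hn]
          · rw [Hgrade_other n j hj hjn]; exact bot_le
        rw [Hgrade_zero] at hx
        obtain ⟨c, hc⟩ := mem_span_singleton.mp hx
        obtain ⟨c', hc'⟩ := mem_span_singleton.mp (hle hx')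
        have h1 : c = 0 := by
          have hfst := congrArg (fun z : Hcar.{w} => z.down.fst) (hc.trans hc'.symm)
          simpa [eU] using hfst
        rw [← hc, h1, zero_smul]
      · by_cases hin : i = (n : ℤ)
        · subst hin
          have hle : (⨆ j, ⨆ _ : j ≠ ((n : ℕ) : ℤ), Hgrade.{w} n j) ≤
              span ℝ {(1 : Hcar.{w})} := by
            refine iSup₂_le fun j hj => ?_
            by_cases hj0 : j = 0
            · subst hj0; rw [Hgrade_zero]
            · rw [Hgrade_other n j hj0 hj]; exact bot_le
          rw [Hgrade_n n hn] at hx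
          obtain ⟨c, hc⟩ := mem_span_singleton.mp hx
          obtain ⟨c', hc'⟩ := mem_span_singleton.mp (hle hx')
          have h1 : c = 0 := by
            have hsnd := congrArg (fun z : Hcar.{w} => z.down.snd) (hc.trans hc'.symm)
            simpa [eU] using hsnd
          rw [← hc, h1, zero_smul]
        · rw [Hgrade_other n i hi0 hin] at hx
          simpa using hx
    · rw [eq_top_iff]
      intro x _
      rw [repr_H x]
      refine add_mem (smul_mem _ _ ?_) (smul_mem _ _ ?_)
      · exact le_iSup (Hgrade.{w} n) 0 (by rw [Hgrade_zero]; exact mem_span_singleton_self _)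
      · exact le_iSup (Hgrade.{w} n) (n : ℤ)
          (by rw [Hgrade_n n hn]; exact mem_span_singleton_self _)
  one_mem := by rw [Hgrade_zero]; exact mem_span_singleton_self _
  mul_mem := by
    intro i j a b ha hb
    by_cases hi : i = 0
    · subst hi
      rw [Hgrade_zero] at ha
      obtain ⟨c, rfl⟩ := mem_span_singleton.mp ha
      rw [zero_add, smul_mul_assoc, one_mul]
      exact smul_mem _ _ hb
    · by_cases hj : j = 0
      · subst hj
        rw [Hgrade_zero] at hb
        obtain ⟨c, rfl⟩ := mem_span_singleton.mp hb
        rw [add_zero, mul_smul_comm, mul_one]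
        exact smul_mem _ _ ha
      · obtain ⟨c, rfl⟩ := Hgrade_ne_zero n i hi a ha
        obtain ⟨c', rfl⟩ := Hgrade_ne_zero n j hj b hb
        rw [smul_mul_smul_comm, eU_mul_eU, smul_zero]
        exact zero_mem _
  d := 0
  d_mem := by intro i a ha; simp
  d_sq := by intro a; simp
  leibniz := by intro i a b ha; simp

end FormAux

universe w' v'

/-- The projection onto the cohomology algebra, in an arbitrary target universe. -/
theorem FormAux.proj (n : ℕ) (hn : 2 ≤ n) (A : DGA.{0, v'} ℝ)
    (ω τ ω' : A.carrier)
    (hω : ω ∈ A.grade n) (hτ : τ ∈ A.grade ((n : ℤ) - 1)) (hω' : ω' ∈ A.grade n)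
    (hdω : A.d ω = 0) (hdτ : A.d τ = ω')
    (hττ : τ * τ = 0)
    (hωω : ω * ω = 0) (hωω' : ω * ω' = 0) (hω'ω' : ω' * ω' = 0)
    (hωτ : ω * τ = 0) (hτω : τ * ω = 0) (hω'τ : ω' * τ = 0) (hτω' : τ * ω' = 0)
    (b : Module.Basis (Fin 4) ℝ A.carrier)
    (hb0 : b 0 = 1) (hb1 : b 1 = ω) (hb2 : b 2 = τ) (hb3 : b 3 = ω') :
    ∃ π : DGAHom A (Hdga.{w'} n hn),
      π.toHom τ = 0 ∧ π.toHom ω' = 0 ∧ π.IsQIso := by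
  classical
  -- basic representation
  have hrepr : ∀ a : A.carrier, ∃ p q r s : ℝ, a = p • 1 + q • ω + r • τ + s • ω' := by
    intro a
    refine ⟨b.repr a 0, b.repr a 1, b.repr a 2, b.repr a 3, ?_⟩
    have h := b.sum_repr a
    rw [Fin.sum_univ_four, hb0, hb1, hb2, hb3] at h
    exact h.symm
  -- d of the generators
  have hd1 : A.d 1 = 0 := by
    have h := A.leibniz 1 1 A.one_mem
    rw [one_mul, Int.negOnePow_zero, mul_one, one_mul] at h
    simp only [Units.val_one, one_smul] at h
    nth_rewrite 1 [← add_zero (A.d 1)] at h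
    exact (add_left_cancel h).symm
  have hdω'0 : A.d ω' = 0 := by rw [← hdτ]; exact A.d_sq τ
  -- the missing product relation, from the Leibniz rule
  have hω'ω : ω' * ω = 0 := by
    have h := A.leibniz τ ω hτ
    rw [hτω, map_zero, hdτ, hdω, mul_zero, smul_zero, add_zero] at h
    exact h.symm
  -- the differential in coordinates
  have hdform : ∀ p q r s : ℝ,
      A.d (p • 1 + q • ω + r • τ + s • ω') = r • ω' := by
    intro p q r s
    rw [map_add, map_add, map_add, map_smul, map_smul, map_smul, map_smul,
      hd1, hdω, hdτ, hdω'0]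
    simp
  -- the multiplication table in coordinates
  have hmul : ∀ p q r s p' q' r' s' : ℝ,
      (p • (1 : A.carrier) + q • ω + r • τ + s • ω') *
        (p' • 1 + q' • ω + r' • τ + s' • ω')
      = (p * p') • 1 + (p * q' + q * p') • ω + (p * r' + r * p') • τ
        + (p * s' + s * p') • ω' := by
    intro p q r s p' q' r' s'
    simp only [mul_add, add_mul, smul_mul_smul_comm, one_mul, mul_one,
      hττ, hωω, hωω', hω'ω', hωτ, hτω, hω'τ, hτω', hω'ω, smul_zero, add_zero, zero_add]
    module
  -- independence of graded pieces
  have hind := A.internal.submodule_iSupIndep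
  have key : ∀ (i : ℤ) (x : A.carrier), x ∈ A.grade i →
      x ∈ (⨆ j, ⨆ _ : j ≠ i, A.grade j) → x = 0 :=
    fun i x hx hx' => Submodule.disjoint_def.mp (hind i) x hx hx'
  have memsup : ∀ (i j : ℤ), j ≠ i → ∀ x ∈ A.grade j,
      x ∈ (⨆ j, ⨆ _ : j ≠ i, A.grade j) :=
    fun i j hj x hx => (le_iSup₂ (f := fun j (_ : j ≠ i) => A.grade j) j hj) hx
  -- numeric inequalities
  have e3 : ((n : ℤ)) ≠ (n : ℤ) - 1 := by omega
  have e4 : ((0 : ℤ)) ≠ (n : ℤ) - 1 := by omega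
  have e5 : ((0 : ℤ)) ≠ (n : ℤ) := by omega
  have e6 : ((n : ℤ) - 1) ≠ (n : ℤ) := by omega
  -- structure of the grading of A
  have F0 : ∀ a ∈ A.grade 0, ∃ c : ℝ, a = c • (1 : A.carrier) := by
    intro a ha
    obtain ⟨p, q, r, s, hA⟩ := hrepr a
    refine ⟨p, ?_⟩
    have hsub : a - p • 1 = q • ω + (r • τ + s • ω') := by rw [hA]; module
    have hmem : a - p • 1 ∈ A.grade 0 :=
      sub_mem ha (Submodule.smul_mem _ _ A.one_mem)
    have hmem' : a - p • 1 ∈ ⨆ j, ⨆ _ : j ≠ (0 : ℤ), A.grade j := by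
      rw [hsub]
      exact add_mem (memsup 0 _ e5.symm _ (Submodule.smul_mem _ _ hω))
        (add_mem (memsup 0 _ e4.symm _ (Submodule.smul_mem _ _ hτ))
          (memsup 0 _ e5.symm _ (Submodule.smul_mem _ _ hω')))
    exact sub_eq_zero.mp (key 0 _ hmem hmem')
  have F1 : ∀ a ∈ A.grade ((n : ℤ) - 1), ∃ c : ℝ, a = c • τ := by
    intro a ha
    obtain ⟨p, q, r, s, hA⟩ := hrepr a
    refine ⟨r, ?_⟩
    have hsub : a - r • τ = p • 1 + (q • ω + s • ω') := by rw [hA]; module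
    have hmem : a - r • τ ∈ A.grade ((n : ℤ) - 1) :=
      sub_mem ha (Submodule.smul_mem _ _ hτ)
    have hmem' : a - r • τ ∈ ⨆ j, ⨆ _ : j ≠ ((n : ℤ) - 1), A.grade j := by
      rw [hsub]
      exact add_mem (memsup _ _ e4 _ (Submodule.smul_mem _ _ A.one_mem))
        (add_mem (memsup _ _ e3 _ (Submodule.smul_mem _ _ hω))
          (memsup _ _ e3 _ (Submodule.smul_mem _ _ hω')))
    exact sub_eq_zero.mp (key _ _ hmem hmem')
  have F2 : ∀ a ∈ A.grade (n : ℤ), ∃ c d : ℝ, a = c • ω + d • ω' := by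
    intro a ha
    obtain ⟨p, q, r, s, hA⟩ := hrepr a
    refine ⟨q, s, ?_⟩
    have hsub : a - (q • ω + s • ω') = p • 1 + r • τ := by rw [hA]; module
    have hmem : a - (q • ω + s • ω') ∈ A.grade (n : ℤ) :=
      sub_mem ha (add_mem (Submodule.smul_mem _ _ hω) (Submodule.smul_mem _ _ hω'))
    have hmem' : a - (q • ω + s • ω') ∈ ⨆ j, ⨆ _ : j ≠ ((n : ℤ)), A.grade j := by
      rw [hsub]
      exact add_mem (memsup _ _ e5 _ (Submodule.smul_mem _ _ A.one_mem))
        (memsup _ _ e6 _ (Submodule.smul_mem _ _ hτ))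
    exact sub_eq_zero.mp (key _ _ hmem hmem')
  have F3 : ∀ i : ℤ, i ≠ 0 → i ≠ (n : ℤ) - 1 → i ≠ (n : ℤ) →
      ∀ a ∈ A.grade i, a = 0 := by
    intro i h0 h1 h2 a ha
    obtain ⟨p, q, r, s, hA⟩ := hrepr a
    refine key i a ha ?_
    rw [hA]
    exact add_mem (add_mem (add_mem
      (memsup _ _ (Ne.symm h0) _ (Submodule.smul_mem _ _ A.one_mem))
      (memsup _ _ (Ne.symm h2) _ (Submodule.smul_mem _ _ hω)))
      (memsup _ _ (Ne.symm h1) _ (Submodule.smul_mem _ _ hτ)))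
      (memsup _ _ (Ne.symm h2) _ (Submodule.smul_mem _ _ hω'))
  -- the projection as a linear map
  set φ : A.carrier →ₗ[ℝ] Hcar := b.constr ℝ ![(1 : Hcar), eU, 0, 0] with hφdef
  have hφ1 : φ 1 = 1 := by rw [← hb0, hφdef, b.constr_basis]; rfl
  have hφω : φ ω = eU := by rw [← hb1, hφdef, b.constr_basis]; rfl
  have hφτ : φ τ = 0 := by rw [← hb2, hφdef, b.constr_basis]; rfl
  have hφω' : φ ω' = 0 := by rw [← hb3, hφdef, b.constr_basis]; rfl
  have hφform : ∀ p q r s : ℝ,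
      φ (p • 1 + q • ω + r • τ + s • ω') = p • 1 + q • eU := by
    intro p q r s
    rw [map_add, map_add, map_add, map_smul, map_smul, map_smul, map_smul,
      hφ1, hφω, hφτ, hφω']
    simp
  have hφmul : ∀ x y : A.carrier, φ (x * y) = φ x * φ y := by
    intro x y
    obtain ⟨p, q, r, s, hx⟩ := hrepr x
    obtain ⟨p', q', r', s', hy⟩ := hrepr y
    rw [hx, hy, hmul, hφform, hφform, hφform]
    simp only [mul_add, add_mul, smul_mul_smul_comm, one_mul, mul_one,
      eU_mul_eU, smul_zero, add_zero]
    module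
  -- it respects the gradings
  have hgrade : ∀ {i : ℤ} {a : A.carrier}, a ∈ A.grade i → φ a ∈ Hgrade n i := by
    intro i a ha
    by_cases hi0 : i = 0
    · subst hi0
      obtain ⟨c, rfl⟩ := F0 a ha
      rw [map_smul, hφ1, Hgrade_zero]
      exact Submodule.smul_mem _ _ (Submodule.mem_span_singleton_self _)
    · by_cases hi1 : i = (n : ℤ) - 1
      · subst hi1
        obtain ⟨c, rfl⟩ := F1 a ha
        rw [map_smul, hφτ, smul_zero]
        exact zero_mem _
      · by_cases hi2 : i = (n : ℤ)
        · subst hi2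
          obtain ⟨c, d, rfl⟩ := F2 a ha
          rw [map_add, map_smul, map_smul, hφω, hφω', smul_zero, add_zero,
            Hgrade_n n hn]
          exact Submodule.smul_mem _ _ (Submodule.mem_span_singleton_self _)
        · rw [F3 i hi0 hi1 hi2 a ha, map_zero]
          exact zero_mem _
  -- the dg algebra H and the projection morphism
  set H : DGA ℝ := Hdga.{w'} n hn with hHdef
  have hHd : H.d = 0 := rfl
  have hHgrade : ∀ i, H.grade i = Hgrade n i := fun _ => rfl
  set π : DGAHom A H :=
    { toHom := AlgHom.ofLinearMap φ hφ1 hφmul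
      map_grade := fun {i a} ha => hgrade ha
      map_d := by
        intro a
        show φ (A.d a) = (0 : Hcar)
        obtain ⟨p, q, r, s, rfl⟩ := hrepr a
        rw [hdform, map_smul, hφω', smul_zero] } with hπdef
  have hπapp : ∀ x, π.toHom x = φ x := fun x => rfl
  -- π is a quasi-isomorphism
  have hQ : π.IsQIso := by
    constructor
    · intro i x hx hdx
      by_cases hi0 : i = 0
      · subst hi0
        rw [hHgrade, Hgrade_zero] at hx
        obtain ⟨c, rfl⟩ := (Submodule.mem_span_singleton (R := ℝ) (M := Hcar)).mp
          (show (x : Hcar) ∈ span ℝ {(1 : Hcar)} from hx)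
        refine ⟨c • 1, Submodule.smul_mem _ _ A.one_mem,
          by rw [map_smul, hd1, smul_zero], 0, ?_⟩
        show φ (c • (1 : A.carrier)) - c • (1 : Hcar) = (0 : Hcar)
        rw [map_smul, hφ1, sub_self]
      · by_cases hi2 : i = (n : ℤ)
        · subst hi2
          rw [hHgrade, Hgrade_n n hn] at hx
          obtain ⟨c, rfl⟩ := (Submodule.mem_span_singleton (R := ℝ) (M := Hcar)).mp
            (show (x : Hcar) ∈ span ℝ {eU} from hx)
          refine ⟨c • ω, Submodule.smul_mem _ _ hω,
            by rw [map_smul, hdω, smul_zero], 0, ?_⟩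
          show φ (c • ω) - c • eU = (0 : Hcar)
          rw [map_smul, hφω, sub_self]
        · rw [hHgrade, Hgrade_other n i hi0 hi2] at hx
          replace hx : (x : Hcar) = 0 :=
            (Submodule.mem_bot ℝ).mp (show (x : Hcar) ∈ (⊥ : Submodule ℝ Hcar) from hx)
          subst hx
          refine ⟨0, zero_mem _, by rw [map_zero], 0, ?_⟩
          show φ (0 : A.carrier) - 0 = (0 : Hcar)
          rw [map_zero, sub_zero]
    · intro i a ha hda hy
      obtain ⟨y, hy⟩ := hy
      have hπa : φ a = 0 := hy
      by_cases hi0 : i = 0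
      · subst hi0
        obtain ⟨c, rfl⟩ := F0 a ha
        rw [map_smul, hφ1] at hπa
        have hc : c = 0 := smul_one_eq_zero hπa
        exact ⟨0, by rw [hc, zero_smul, map_zero]⟩
      · by_cases hi1 : i = (n : ℤ) - 1
        · subst hi1
          obtain ⟨c, rfl⟩ := F1 a ha
          rw [map_smul, hdτ] at hda
          have hc : c = 0 := by
            rcases smul_eq_zero.mp hda with h | h
            · exact h
            · exact absurd h (by rw [← hb3]; exact b.ne_zero 3)
          exact ⟨0, by rw [hc, zero_smul, map_zero]⟩
        · by_cases hi2 : i = (n : ℤ)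
          · subst hi2
            obtain ⟨c, d, rfl⟩ := F2 a ha
            rw [map_add, map_smul, map_smul, hφω, hφω', smul_zero, add_zero] at hπa
            have hc : c = 0 := smul_eU_eq_zero hπa
            refine ⟨d • τ, ?_⟩
            rw [map_smul, hdτ, hc, zero_smul, zero_add]
          · exact ⟨0, by rw [F3 i hi0 hi1 hi2 a ha, map_zero]⟩
  exact ⟨π, hφτ, hφω', hQ⟩


open FormAux

/-- Let `A` be the graded-commutative real dg algebra with basis
`1` (degree 0), `ω` (degree `n`, `n ≥ 2`), `τ` (degree `n − 1`) and `ω'` (degree `n`),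
where the differential vanishes on the subalgebra generated by `1` and `ω`, `dτ = ω'`,
`τ·τ = 0`, `ω·ω = ω·ω' = ω'·ω' = 0` and `ω·τ = τ·ω = ω'·τ = τ·ω' = 0`.  Then the
projection `A → H(A)` killing `τ` and `ω'` is a quasi-isomorphism of dg algebras;
hence `A` is formal. -/
theorem formality_spheres_stmt9 (n : ℕ) (hn : 2 ≤ n) (A : DGA ℝ)
    (ω τ ω' : A.carrier)
    (hω : ω ∈ A.grade n) (hτ : τ ∈ A.grade ((n : ℤ) - 1)) (hω' : ω' ∈ A.grade n)
    (hdω : A.d ω = 0) (hdτ : A.d τ = ω')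
    (hττ : τ * τ = 0)
    (hωω : ω * ω = 0) (hωω' : ω * ω' = 0) (hω'ω' : ω' * ω' = 0)
    (hωτ : ω * τ = 0) (hτω : τ * ω = 0) (hω'τ : ω' * τ = 0) (hτω' : τ * ω' = 0)
    (b : Module.Basis (Fin 4) ℝ A.carrier)
    (hb0 : b 0 = 1) (hb1 : b 1 = ω) (hb2 : b 2 = τ) (hb3 : b 3 = ω') :
    (∃ (H : DGA ℝ) (π : DGAHom A H),
      H.d = 0 ∧ π.toHom τ = 0 ∧ π.toHom ω' = 0 ∧ π.IsQIso) ∧ A.IsFormal := by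
  obtain ⟨π₁, h1, h2, h3⟩ := FormAux.proj n hn A ω τ ω' hω hτ hω' hdω hdτ hττ
    hωω hωω' hω'ω' hωτ hτω hω'τ hτω' b hb0 hb1 hb2 hb3
  obtain ⟨π₂, _, _, h3'⟩ := FormAux.proj n hn A ω τ ω' hω hτ hω' hdω hdτ hττ
    hωω hωω' hω'ω' hωτ hτω hω'τ hτω' b hb0 hb1 hb2 hb3
  refine ⟨⟨Hdga n hn, π₁, rfl, h1, h2, h3⟩, A, Hdga n hn,
    ⟨AlgHom.id ℝ A.carrier, fun ha => ha, fun a => rfl⟩, π₂, rfl, ?_, h3'⟩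
  constructor
  · intro i x hx hdx
    exact ⟨x, hx, hdx, 0, by simp⟩
  · intro i a ha hda hy
    exact hy
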